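/- Let p_σ(x) = 0.8·(1/(σ√(2π)))·e^{−x²/(2σ²)} + 0.2·σ/(π(σ² + x²)) be the atom-free spike-and-slab mixture of a N(0,σ²) density and a Cauchy density with probable error σ. Then for every x ≠ 0, lim_{σ→0⁺} p_σ(x)/(0.2·σ·√(2/π)) = 1/(x²·√(2π)). -/

import Mathlib

open Filter Real Topology

lemma aux_exp_limit (b : ℝ) (hb : 0 < b) :
    Tendsto (fun σ : ℝ => (σ ^ 2)⁻¹ * Real.exp (-b * (σ ^ 2)⁻¹)) (𝓝[>] 0) (𝓝 0) := by
  have h1 : Tendsto (fun σ : ℝ => σ ^ 2) (𝓝[>] 0) (𝓝[>] 0) := by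
    apply tendsto_nhdsWithin_of_tendsto_nhds_of_eventually_within
    · have := (continuous_pow 2).tendsto (0 : ℝ)
      simpa using this.mono_left nhdsWithin_le_nhds
    · filter_upwards [self_mem_nhdsWithin] with σ hσ
      exact pow_pos (Set.mem_Ioi.mp hσ) 2
  have h2 : Tendsto (fun σ : ℝ => (σ ^ 2)⁻¹) (𝓝[>] 0) atTop :=
    tendsto_inv_nhdsGT_zero.comp h1
  have h3 : Tendsto (fun u : ℝ => u * Real.exp (-b * u)) atTop (𝓝 0) := by
    have hbase : Tendsto (fun t : ℝ => t ^ 1 * Real.exp (-t)) atTop (𝓝 0) :=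
      Real.tendsto_pow_mul_exp_neg_atTop_nhds_zero 1
    have hbt : Tendsto (fun u : ℝ => b * u) atTop atTop :=
      Tendsto.const_mul_atTop hb tendsto_id
    have := (hbase.comp hbt).const_mul b⁻¹
    simp only [mul_zero] at this
    refine Tendsto.congr ?_ this
    intro u
    field_simp [Function.comp]
    simp [Function.comp_apply]
  exact h3.comp h2

theorem spike_and_slab_sparse_limit (x : ℝ) (hx : x ≠ 0) :
    Tendsto
      (fun σ : ℝ =>
        (0.8 * (1 / (σ * Real.sqrt (2 * π))) * Real.exp (-x ^ 2 / (2 * σ ^ 2)) +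
            0.2 * (σ / (π * (σ ^ 2 + x ^ 2)))) /
          (0.2 * σ * Real.sqrt (2 / π)))
      (𝓝[>] 0) (𝓝 (1 / (x ^ 2 * Real.sqrt (2 * π)))) := by
  have hpi : (0:ℝ) < π := Real.pi_pos
  have hs1 : Real.sqrt (2 * π) > 0 := Real.sqrt_pos.mpr (by positivity)
  have hs2 : Real.sqrt (2 / π) > 0 := Real.sqrt_pos.mpr (by positivity)
  have hprod : Real.sqrt (2 * π) * Real.sqrt (2 / π) = 2 := by
    rw [← Real.sqrt_mul (by positivity)]
    rw [show (2 * π) * (2 / π) = 4 by field_simp; ring]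
    rw [show (4:ℝ) = 2 ^ 2 by norm_num, Real.sqrt_sq (by norm_num)]
  have hx2 : (0:ℝ) < x ^ 2 := by positivity
  -- the target function equals g on σ > 0
  set g : ℝ → ℝ := fun σ =>
    2 * ((σ ^ 2)⁻¹ * Real.exp (-(x ^ 2 / 2) * (σ ^ 2)⁻¹)) +
      1 / (π * (σ ^ 2 + x ^ 2) * Real.sqrt (2 / π)) with hg
  have heq : ∀ᶠ σ in 𝓝[>] (0:ℝ),
      (0.8 * (1 / (σ * Real.sqrt (2 * π))) * Real.exp (-x ^ 2 / (2 * σ ^ 2)) +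
            0.2 * (σ / (π * (σ ^ 2 + x ^ 2)))) /
          (0.2 * σ * Real.sqrt (2 / π)) = g σ := by
    filter_upwards [self_mem_nhdsWithin] with σ hσ
    have hσ0 : σ ≠ 0 := ne_of_gt hσ
    have hsum : σ ^ 2 + x ^ 2 ≠ 0 := by positivity
    have hexp : Real.exp (-x ^ 2 / (2 * σ ^ 2)) = Real.exp (-(x ^ 2 / 2) * (σ ^ 2)⁻¹) := by
      congr 1
      field_simp
    have hs2eq : Real.sqrt (2 / π) = 2 / Real.sqrt (2 * π) := by
      rw [eq_div_iff hs1.ne']; linarith [hprod]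
    rw [hg, hexp, hs2eq]
    field_simp
    ring
  -- limit of g
  have hlim1 : Tendsto (fun σ : ℝ =>
      2 * ((σ ^ 2)⁻¹ * Real.exp (-(x ^ 2 / 2) * (σ ^ 2)⁻¹))) (𝓝[>] 0) (𝓝 0) := by
    have := (aux_exp_limit (x ^ 2 / 2) (by positivity)).const_mul 2
    simpa using this
  have hlim2 : Tendsto (fun σ : ℝ =>
      1 / (π * (σ ^ 2 + x ^ 2) * Real.sqrt (2 / π))) (𝓝[>] 0)
      (𝓝 (1 / (π * (0 ^ 2 + x ^ 2) * Real.sqrt (2 / π)))) := by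
    apply Tendsto.mono_left _ nhdsWithin_le_nhds
    apply Tendsto.div tendsto_const_nhds
    · exact (by fun_prop : Continuous fun σ : ℝ => π * (σ ^ 2 + x ^ 2) * Real.sqrt (2 / π)).tendsto 0
    · positivity
  have hval : 1 / (π * ((0:ℝ) ^ 2 + x ^ 2) * Real.sqrt (2 / π)) =
      1 / (x ^ 2 * Real.sqrt (2 * π)) := by
    have hs2eq : Real.sqrt (2 / π) = 2 / Real.sqrt (2 * π) := by
      rw [eq_div_iff hs1.ne']; linarith [hprod]
    have : π * Real.sqrt (2 / π) = Real.sqrt (2 * π) := by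
      rw [hs2eq, mul_div_assoc', div_eq_iff hs1.ne']
      have h := Real.sq_sqrt (show (0:ℝ) ≤ 2 * π by positivity)
      nlinarith [h]
    rw [show π * ((0:ℝ) ^ 2 + x ^ 2) * Real.sqrt (2 / π)
        = (π * Real.sqrt (2 / π)) * x ^ 2 by ring, this, mul_comm]
  have : Tendsto g (𝓝[>] (0:ℝ)) (𝓝 (1 / (x ^ 2 * Real.sqrt (2 * π)))) := by
    have := hlim1.add hlim2
    rw [zero_add, hval] at this
    exact this
  exact this.congr' (heq.mono fun σ h => h.symm)
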